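/- Let A(t) = diag(1, K(t)) where K : ℝ/Tℤ → ℝ is continuous with K(t) ≥ 1 for all t. Let v : ℝ/Tℤ → ℝ² ∖ {0} satisfy τ·v(t) = −J₀·v'(t) − A(t)·v(t) for some τ ∈ ℝ, where J₀ = [[0,−1],[1,0]]. Writing v(t) = |v(t)|·e^{2πiθ(t)} for a smooth angle function θ, the winding Δ = θ(T) − θ(0) satisfies Δ ≥ (T/2π)(1 + τ). -/

import Mathlib

open Real

/-- Winding lower bound: let A(t) = diag(1,K(t)) with K T-periodic, K ≥ 1, and
let v = (v₁,v₂) be a nonvanishing T-periodic solution of τ·v = −J₀v' − A(t)v,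
written as v(t) = r(t)·(cos 2πθ(t), sin 2πθ(t)).  Then the winding
Δ = θ(T) − θ(0) satisfies Δ ≥ (T/2π)(1+τ). -/
theorem stmt_14 (K : ℝ → ℝ) (v₁ v₂ d₁ d₂ r θ : ℝ → ℝ) (τ T : ℝ)
    (hT : 0 < T) (hK : Continuous K) (hKper : ∀ t, K (t + T) = K t)
    (hKge : ∀ t, 1 ≤ K t)
    (hv₁per : ∀ t, v₁ (t + T) = v₁ t) (hv₂per : ∀ t, v₂ (t + T) = v₂ t)
    (hd₁ : ∀ t, HasDerivAt v₁ (d₁ t) t) (hd₂ : ∀ t, HasDerivAt v₂ (d₂ t) t)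
    -- the eigenvalue equation τ·v = −J₀v' − A(t)v componentwise
    (heq₁ : ∀ t, τ * v₁ t = d₂ t - v₁ t)
    (heq₂ : ∀ t, τ * v₂ t = -d₁ t - K t * v₂ t)
    -- polar decomposition with smooth angle θ and radius r > 0
    (hr : ∀ t, r t = Real.sqrt (v₁ t ^ 2 + v₂ t ^ 2))
    (hrpos : ∀ t, 0 < r t)
    (hθd : Differentiable ℝ θ)
    (hpol₁ : ∀ t, v₁ t = r t * Real.cos (2 * π * θ t))
    (hpol₂ : ∀ t, v₂ t = r t * Real.sin (2 * π * θ t)) :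
    θ T - θ 0 ≥ (T / (2 * π)) * (1 + τ) := by
  have hπ : 0 < π := Real.pi_pos
  -- key pointwise bound on the derivative of θ
  have key : ∀ t, 1 + τ ≤ 2 * π * deriv θ t := by
    intro t
    have hxpos : 0 < v₁ t ^ 2 + v₂ t ^ 2 := by
      have := hrpos t
      rw [hr t] at this
      exact Real.sqrt_pos.mp this
    have hsq : r t ^ 2 = v₁ t ^ 2 + v₂ t ^ 2 := by
      rw [hr t, Real.sq_sqrt hxpos.le]
    -- derivative of r
    have hsum : HasDerivAt (fun s => v₁ s ^ 2 + v₂ s ^ 2)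
        (2 * v₁ t * d₁ t + 2 * v₂ t * d₂ t) t := by
      have h1 := ((hd₁ t).pow 2)
      have h2 := ((hd₂ t).pow 2)
      rw [show (fun s => v₁ s ^ 2 + v₂ s ^ 2) = v₁ ^ 2 + v₂ ^ 2 from rfl]
      simpa [mul_comm, mul_assoc, mul_left_comm] using h1.add h2
    have hrne : Real.sqrt (v₁ t ^ 2 + v₂ t ^ 2) ≠ 0 := by
      rw [← hr t]; exact (hrpos t).ne'
    set ρ := 1 / (2 * Real.sqrt (v₁ t ^ 2 + v₂ t ^ 2)) *
        (2 * v₁ t * d₁ t + 2 * v₂ t * d₂ t) with hρ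
    have hrder : HasDerivAt r ρ t := by
      have h := (Real.hasDerivAt_sqrt hxpos.ne').comp t hsum
      have heq : r = fun s => Real.sqrt (v₁ s ^ 2 + v₂ s ^ 2) := funext hr
      rw [heq]
      exact h
    set dθ := deriv θ t with hdθ
    have hθt : HasDerivAt θ dθ t := (hθd t).hasDerivAt
    -- derivative of r·cos(2πθ)
    have hcos : HasDerivAt (fun s => Real.cos (2 * π * θ s))
        (-Real.sin (2 * π * θ t) * (2 * π * dθ)) t := by
      have harg : HasDerivAt (fun s => 2 * π * θ s) (2 * π * dθ) t :=
        hθt.const_mul (2 * π)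
      exact (Real.hasDerivAt_cos (2 * π * θ t)).comp t harg
    have hsin : HasDerivAt (fun s => Real.sin (2 * π * θ s))
        (Real.cos (2 * π * θ t) * (2 * π * dθ)) t := by
      have harg : HasDerivAt (fun s => 2 * π * θ s) (2 * π * dθ) t :=
        hθt.const_mul (2 * π)
      exact (Real.hasDerivAt_sin (2 * π * θ t)).comp t harg
    have hv₁' : HasDerivAt v₁
        (ρ * Real.cos (2 * π * θ t) + r t * (-Real.sin (2 * π * θ t) * (2 * π * dθ))) t := by
      have := hrder.mul hcos
      have heqf : v₁ = fun s => r s * Real.cos (2 * π * θ s) := funext hpol₁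
      rw [heqf]; exact this
    have hv₂' : HasDerivAt v₂
        (ρ * Real.sin (2 * π * θ t) + r t * (Real.cos (2 * π * θ t) * (2 * π * dθ))) t := by
      have := hrder.mul hsin
      have heqf : v₂ = fun s => r s * Real.sin (2 * π * θ s) := funext hpol₂
      rw [heqf]; exact this
    have hd₁eq : d₁ t = ρ * Real.cos (2 * π * θ t) +
        r t * (-Real.sin (2 * π * θ t) * (2 * π * dθ)) := (hd₁ t).unique hv₁'
    have hd₂eq : d₂ t = ρ * Real.sin (2 * π * θ t) +
        r t * (Real.cos (2 * π * θ t) * (2 * π * dθ)) := (hd₂ t).unique hv₂'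
    -- cross product identity
    have hcross : v₁ t * d₂ t - v₂ t * d₁ t = 2 * π * dθ * r t ^ 2 := by
      rw [hd₁eq, hd₂eq, hpol₁ t, hpol₂ t]
      have hpyth := Real.sin_sq_add_cos_sq (2 * π * θ t)
      linear_combination (2 * π * dθ * r t ^ 2) * hpyth
    -- cross product from the ODE
    have hode : v₁ t * d₂ t - v₂ t * d₁ t
        = (1 + τ) * v₁ t ^ 2 + (K t + τ) * v₂ t ^ 2 := by
      have h1 := heq₁ t
      have h2 := heq₂ t
      linear_combination (-v₁ t) * h1 - v₂ t * h2
    have hEq : 2 * π * dθ * (v₁ t ^ 2 + v₂ t ^ 2)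
        = (1 + τ) * v₁ t ^ 2 + (K t + τ) * v₂ t ^ 2 := by
      rw [← hsq, ← hcross, hode]
    have hge : (1 + τ) * (v₁ t ^ 2 + v₂ t ^ 2)
        ≤ 2 * π * dθ * (v₁ t ^ 2 + v₂ t ^ 2) := by
      have hK1 := hKge t
      nlinarith [mul_nonneg (sub_nonneg.mpr (hKge t)) (sq_nonneg (v₂ t)), hEq]
    exact le_of_mul_le_mul_right (by linarith [hge]) hxpos
  -- monotonicity of t ↦ θ t - ((1+τ)/(2π))·t
  set c := (1 + τ) / (2 * π) with hc
  have hmono : Monotone (fun t => θ t - c * t) := by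
    apply monotone_of_deriv_nonneg
    · exact hθd.sub ((differentiable_id.const_mul c))
    · intro t
      have h2 : HasDerivAt (fun t : ℝ => c * t) c t := by
        simpa using (hasDerivAt_id t).const_mul c
      have hder : HasDerivAt (fun t => θ t - c * t) (deriv θ t - c) t :=
        (hθd t).hasDerivAt.sub h2
      rw [hder.deriv]
      have := key t
      have hcle : c ≤ deriv θ t := by
        rw [hc, div_le_iff₀ (by positivity)]
        linarith [this]
      linarith
  have := hmono hT.le
  simp only at this
  have hfin : θ 0 - c * 0 ≤ θ T - c * T := this
  have : c * T ≤ θ T - θ 0 := by linarith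
  calc θ T - θ 0 ≥ c * T := this
    _ = (T / (2 * π)) * (1 + τ) := by rw [hc]; ring
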